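/- The function δ(λ) = 1/λ + 1/(1 − e^λ) is monotonically decreasing on ℝ \ {0}, with limit 1 as λ → −∞ and limit 0 as λ → +∞. -/

import Mathlib

open Real Filter Set

lemma exp_ne_one' {x : ℝ} (hx : x ≠ 0) : Real.exp x ≠ 1 := by
  simpa [Real.exp_eq_one_iff] using hx

lemma one_sub_exp_ne {x : ℝ} (hx : x ≠ 0) : 1 - Real.exp x ≠ 0 := by
  intro h; exact exp_ne_one' hx (by linarith)

lemma ccW_hasDeriv {x : ℝ} (hx : x ≠ 0) :
    HasDerivAt (fun lam : ℝ => 1 / lam + 1 / (1 - Real.exp lam))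
      (-(1/x^2) + Real.exp x / (1 - Real.exp x)^2) x := by
  have h1 : HasDerivAt (fun y : ℝ => 1 / y) (-(1/x^2)) x := by
    simpa [one_div] using hasDerivAt_inv hx
  have h2 : HasDerivAt (fun y : ℝ => 1 - Real.exp y) (-Real.exp x) x := by
    simpa using ((Real.hasDerivAt_exp x).const_sub 1)
  have h3 : HasDerivAt (fun y : ℝ => 1 / (1 - Real.exp y))
      (Real.exp x / (1 - Real.exp x)^2) x := by
    have := h2.inv (one_sub_exp_ne hx)
    simpa [one_div, neg_div, Pi.inv_def] using this
  exact h1.add h3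

lemma ccW_deriv_neg {x : ℝ} (hx : x ≠ 0) :
    -(1/x^2) + Real.exp x / (1 - Real.exp x)^2 < 0 := by
  have hsq : (x/2)^2 < (Real.sinh (x/2))^2 := by
    rcases lt_or_gt_of_ne hx with h | h
    · have h2 : x/2 < 0 := by linarith
      have hs := Real.self_lt_sinh_iff.2 (show (0:ℝ) < -(x/2) by linarith)
      rw [Real.sinh_neg] at hs
      nlinarith [hs]
    · have h2 : (0:ℝ) < x/2 := by linarith
      have hs := Real.self_lt_sinh_iff.2 h2
      nlinarith [hs]
  set a := Real.exp (x/2) with ha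
  have hapos : 0 < a := Real.exp_pos _
  have hexp : Real.exp x = a^2 := by
    have hxx : x/2 + x/2 = x := by ring
    rw [ha, sq, ← Real.exp_add, hxx]
  have hsinh : Real.sinh (x/2) = (a - a⁻¹)/2 := by
    rw [Real.sinh_eq, ha, ← Real.exp_neg]
  have key : Real.exp x * x^2 < (1 - Real.exp x)^2 := by
    have h4 : (1 - Real.exp x)^2 = Real.exp x * (2 * Real.sinh (x/2))^2 := by
      rw [hexp, hsinh]; field_simp; ring
    rw [h4, hexp]
    nlinarith [mul_lt_mul_of_pos_left hsq (show (0:ℝ) < a^2 by positivity)]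
  have hx2 : (0:ℝ) < x^2 := by positivity
  have he2 : (0:ℝ) < (1 - Real.exp x)^2 := by
    have := one_sub_exp_ne hx; positivity
  have : Real.exp x / (1 - Real.exp x)^2 < 1/x^2 := by
    rw [div_lt_div_iff₀ he2 hx2]; linarith
  linarith

lemma F_pos {x : ℝ} (hx : 0 < x) : 0 < (x - 2) * Real.exp x + x + 2 := by
  have hG : ∀ y ∈ Set.Ioi (0:ℝ), 0 < (y - 1) * Real.exp y + 1 := by
    have hmono : StrictMonoOn (fun y : ℝ => (y - 1) * Real.exp y + 1) (Set.Ici 0) := by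
      apply strictMonoOn_of_deriv_pos (convex_Ici 0)
      · fun_prop
      · intro y hy
        rw [interior_Ici] at hy
        have hd : HasDerivAt (fun y : ℝ => (y - 1) * Real.exp y + 1)
            (y * Real.exp y) y := by
          have h := (((hasDerivAt_id y).sub_const 1).mul (Real.hasDerivAt_exp y)).add_const 1
          exact h.congr_deriv (by simp only [id_eq]; ring)
        rw [hd.deriv]
        exact mul_pos hy (Real.exp_pos y)
    intro y hy
    have := hmono (Set.self_mem_Ici) (Set.mem_Ici.2 (le_of_lt hy)) hy
    simpa using this
  have hmono : StrictMonoOn (fun y : ℝ => (y - 2) * Real.exp y + y + 2) (Set.Ici 0) := by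
    apply strictMonoOn_of_deriv_pos (convex_Ici 0)
    · fun_prop
    · intro y hy
      rw [interior_Ici] at hy
      have hd : HasDerivAt (fun y : ℝ => (y - 2) * Real.exp y + y + 2)
          ((y - 1) * Real.exp y + 1) y := by
        have h := ((((hasDerivAt_id y).sub_const 2).mul (Real.hasDerivAt_exp y)).add
          (hasDerivAt_id y)).add_const 2
        exact h.congr_deriv (by simp only [id_eq]; ring)
      rw [hd.deriv]
      exact hG y hy
  have := hmono Set.self_mem_Ici (Set.mem_Ici.2 hx.le) hx
  simpa using this

lemma ccW_lt_half {x : ℝ} (hx : 0 < x) :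
    1 / x + 1 / (1 - Real.exp x) < 1/2 := by
  have hne := one_sub_exp_ne hx.ne'
  have hlt : 1 < Real.exp x := by
    rw [show (1:ℝ) = Real.exp 0 by simp]; exact Real.exp_lt_exp.2 hx
  have hne2 : Real.exp x - 1 ≠ 0 := by intro h; exact hne (by linarith)
  have heq : 1/2 - (1 / x + 1 / (1 - Real.exp x)) =
      ((x - 2) * Real.exp x + x + 2) / (2 * x * (Real.exp x - 1)) := by
    field_simp
    ring
  have hpos : 0 < ((x - 2) * Real.exp x + x + 2) / (2 * x * (Real.exp x - 1)) :=
    div_pos (F_pos hx) (by nlinarith)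
  linarith [heq ▸ hpos]

lemma ccW_gt_half {x : ℝ} (hx : x < 0) :
    1/2 < 1 / x + 1 / (1 - Real.exp x) := by
  have h1 := ccW_lt_half (show 0 < -x by linarith)
  have hne := one_sub_exp_ne hx.ne
  have hne' := one_sub_exp_ne (show (-x) ≠ 0 by simpa using hx.ne)
  have hne2 : Real.exp x - 1 ≠ 0 := by intro h; exact hne (by linarith)
  have hsym : 1 / x + 1 / (1 - Real.exp x) =
      1 - (1 / (-x) + 1 / (1 - Real.exp (-x))) := by
    rw [Real.exp_neg] at hne' ⊢
    have hE : Real.exp x ≠ 0 := (Real.exp_pos x).ne'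
    field_simp
    ring
  rw [hsym]; linarith

set_option maxHeartbeats 1000000 in
theorem ccWeight_monotone_limits :
    StrictAntiOn (fun lam : ℝ => 1 / lam + 1 / (1 - Real.exp lam)) {0}ᶜ ∧
      Filter.Tendsto (fun lam : ℝ => 1 / lam + 1 / (1 - Real.exp lam))
        Filter.atBot (nhds 1) ∧
      Filter.Tendsto (fun lam : ℝ => 1 / lam + 1 / (1 - Real.exp lam))
        Filter.atTop (nhds 0) := by
  have hanti : ∀ (s : Set ℝ), (0 : ℝ) ∉ s → Convex ℝ s → IsOpen s →
      StrictAntiOn (fun lam : ℝ => 1 / lam + 1 / (1 - Real.exp lam)) s := by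
    intro s hs hc ho
    apply strictAntiOn_of_deriv_neg hc
    · intro x hx
      exact ((ccW_hasDeriv (fun h => hs (h ▸ hx))).continuousAt).continuousWithinAt
    · intro x hx
      rw [ho.interior_eq] at hx
      have hx0 : x ≠ 0 := fun h => hs (h ▸ hx)
      rw [(ccW_hasDeriv hx0).deriv]
      exact ccW_deriv_neg hx0
  have hb0 : Tendsto (fun x : ℝ => x⁻¹) atBot (nhds (0:ℝ)) := by
    have ha : Tendsto (fun x : ℝ => (-x)⁻¹) atBot (nhds (0:ℝ)) :=
      tendsto_inv_atTop_zero.comp tendsto_neg_atBot_atTop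
    have := ha.neg
    simpa [inv_neg] using this
  refine ⟨?_, ?_, ?_⟩
  · intro x hx y hy hxy
    rcases lt_trichotomy y 0 with hy0 | hy0 | hy0
    · exact hanti (Set.Iio 0) (by simp) (convex_Iio 0) isOpen_Iio
        (Set.mem_Iio.2 (hxy.trans hy0)) (Set.mem_Iio.2 hy0) hxy
    · exact absurd hy0 (by simpa using hy)
    · rcases lt_trichotomy x 0 with hx0 | hx0 | hx0
      · exact lt_trans (ccW_lt_half hy0) (ccW_gt_half hx0)
      · exact absurd hx0 (by simpa using hx)
      · exact hanti (Set.Ioi 0) (by simp) (convex_Ioi 0) isOpen_Ioi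
          (Set.mem_Ioi.2 hx0) (Set.mem_Ioi.2 hy0) hxy
  · have h1 : Tendsto (fun lam : ℝ => 1 / lam) atBot (nhds 0) := by
      simpa [one_div] using hb0
    have hsub : Tendsto (fun lam : ℝ => 1 - Real.exp lam) atBot (nhds 1) := by
      simpa using (tendsto_const_nhds.sub Real.tendsto_exp_atBot)
    have h2 : Tendsto (fun lam : ℝ => 1 / (1 - Real.exp lam)) atBot (nhds 1) := by
      have := hsub.inv₀ one_ne_zero
      simpa [one_div] using this
    simpa using h1.add h2
  · have h1 : Tendsto (fun lam : ℝ => 1 / lam) atTop (nhds 0) := by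
      simpa [one_div] using tendsto_inv_atTop_zero
    have hb : Tendsto (fun lam : ℝ => 1 - Real.exp lam) atTop atBot := by
      apply tendsto_atBot_add_const_left
      exact (tendsto_neg_atTop_atBot).comp Real.tendsto_exp_atTop
    have h2 : Tendsto (fun lam : ℝ => 1 / (1 - Real.exp lam)) atTop (nhds 0) := by
      simpa [one_div, Function.comp_def] using hb0.comp hb
    simpa using h1.add h2
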